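/- There exists a base metric d on reward functions (namely d(r,r') = |r_1(s̄,ā) − r'_1(s̄,ā)| for a fixed state-action pair (s̄,ā)) with the following property: for every IRL problem (M, π^E) with |S| ≥ 2 and horizon H ≥ 2, there exists another IRL problem (M̂, π̂^E) on the same state space, action space and horizon such that D^H(𝓡★, 𝓡̂) = 0 while D^M(R★, R̂) ≥ 1/2, where 𝓡★, 𝓡̂ are the reward sets induced by the ground-truth reward mappings R★, R̂ of (M,π^E) and (M̂,π̂^E) respectively, D^H is the Hausdorff metric induced by d, and D^M is the mapping-based metric induced by d. -/

import Mathlib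

open Finset
open scoped Classical ENNReal NNReal

namespace IRL

/-- `P` is a valid transition kernel: each `P h s a` is a probability
distribution over next states. -/
def IsKernel {S A : Type*} [Fintype S] (P : ℕ → S → A → S → ℝ) : Prop :=
  ∀ h s a, (∀ s', 0 ≤ P h s a s') ∧ ∑ s', P h s a s' = 1

/-- `π` is a valid (Markov, time-dependent, randomized) policy. -/
def IsPolicy {S A : Type*} [Fintype A] (π : ℕ → S → A → ℝ) : Prop :=
  ∀ h s, (∀ a, 0 ≤ π h s a) ∧ ∑ a, π h s a = 1

/-- Value function `V^π_h(s; r)` (steps are 0-based, horizon `H`). -/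
noncomputable def Vval {S A : Type*} [Fintype S] [Fintype A] (H : ℕ)
    (P : ℕ → S → A → S → ℝ) (π : ℕ → S → A → ℝ) (r : ℕ → S → A → ℝ)
    (h : ℕ) (s : S) : ℝ :=
  if hlt : h < H then
    ∑ a, π h s a * (r h s a + ∑ s', P h s a s' * Vval H P π r (h + 1) s')
  else 0
termination_by H - h
decreasing_by omega

/-- Q-function `Q^π_h(s, a; r)`. -/
noncomputable def Qval {S A : Type*} [Fintype S] [Fintype A] (H : ℕ)
    (P : ℕ → S → A → S → ℝ) (π : ℕ → S → A → ℝ) (r : ℕ → S → A → ℝ)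
    (h : ℕ) (s : S) (a : A) : ℝ :=
  if h < H then r h s a + ∑ s', P h s a s' * Vval H P π r (h + 1) s' else 0

/-- `π` is an optimal policy of the MDP `M ∪ r`: its advantage function is
nonpositive at every `(h, s, a)`. -/
def IsOptimal {S A : Type*} [Fintype S] [Fintype A] (H : ℕ)
    (P : ℕ → S → A → S → ℝ) (r : ℕ → S → A → ℝ) (π : ℕ → S → A → ℝ) : Prop :=
  ∀ h, h < H → ∀ s a, Qval H P π r h s a ≤ Vval H P π r h s

/-- `r` is a feasible reward for the IRL problem `(M, πE)`. -/
def Feasible {S A : Type*} [Fintype S] [Fintype A] (H : ℕ)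
    (P : ℕ → S → A → S → ℝ) (πE : ℕ → S → A → ℝ) (r : ℕ → S → A → ℝ) : Prop :=
  IsOptimal H P r πE

/-- State visitation probability `d^π_h(s)`, starting from `s1`. -/
noncomputable def dvisit {S A : Type*} [Fintype S] [Fintype A]
    (P : ℕ → S → A → S → ℝ) (π : ℕ → S → A → ℝ) (s1 : S) : ℕ → S → ℝ
  | 0 => fun s => if s = s1 then 1 else 0
  | h + 1 => fun s' => ∑ s, ∑ a, dvisit P π s1 h s * π h s a * P h s a s'

/-- State-action visitation probability `d^π_h(s, a)`. -/
noncomputable def dvisitSA {S A : Type*} [Fintype S] [Fintype A]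
    (P : ℕ → S → A → S → ℝ) (π : ℕ → S → A → ℝ) (s1 : S)
    (h : ℕ) (s : S) (a : A) : ℝ :=
  dvisit P π s1 h s * π h s a

/-- The ground-truth reward mapping `R★` of the IRL problem `(M, πE)`:
`[R★(V,A)]_h(s,a) = -A_h(s,a)·1{a ∉ supp πE_h(·|s)} + V_h(s) - [P_h V_{h+1}](s,a)`. -/
noncomputable def RStar {S A : Type*} [Fintype S] [Fintype A]
    (P : ℕ → S → A → S → ℝ) (πE : ℕ → S → A → ℝ)
    (V : ℕ → S → ℝ) (Adv : ℕ → S → A → ℝ) : ℕ → S → A → ℝ := fun h s a =>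
  -(Adv h s a) * (if πE h s a = 0 then 1 else 0) + V h s -
    ∑ s', P h s a s' * V (h + 1) s'

/-- The parameter class `V̄` of bounded "value functions" (0-based steps; the
bound `H - h` in particular forces `V h = 0` for `h ≥ H`, i.e. `V_{H+1} = 0`). -/
def Vbar (S : Type*) (H : ℕ) : Set (ℕ → S → ℝ) :=
  {V | ∀ h s, |V h s| ≤ ((H - h : ℕ) : ℝ)}

/-- The parameter class `Ā` of bounded nonnegative "advantage functions". -/
def Abar (S A : Type*) (H : ℕ) : Set (ℕ → S → A → ℝ) :=
  {Adv | ∀ h s a, 0 ≤ Adv h s a ∧ Adv h s a ≤ ((H - h : ℕ) : ℝ)}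

/-- Optimal value `V★_1(s1; r)`. -/
noncomputable def Vstar {S A : Type*} [Fintype S] [Fintype A] (H : ℕ)
    (P : ℕ → S → A → S → ℝ) (r : ℕ → S → A → ℝ) (s1 : S) : ℝ :=
  ⨆ π : {π : ℕ → S → A → ℝ // IsPolicy π}, Vval H P π.1 r 0 s1

/-- The base-metric bound `d^π(r, r') ≤ ε`, stated pointwise over steps `h < H`
(recall `d^π(r,r') = max_{h} E_{s_h ∼ d^π_h} |V^π_h(s_h;r) - V^π_h(s_h;r')|`). -/
def dpiLe {S A : Type*} [Fintype S] [Fintype A] (H : ℕ)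
    (P : ℕ → S → A → S → ℝ) (π : ℕ → S → A → ℝ) (s1 : S)
    (r r' : ℕ → S → A → ℝ) (ε : ℝ) : Prop :=
  ∀ h, h < H →
    ∑ s, dvisit P π s1 h s * |Vval H P π r h s - Vval H P π r' h s| ≤ ε

/-- The expert policy is `Δ`-well-posed. -/
def WellPosed {S A : Type*} (H : ℕ) (πE : ℕ → S → A → ℝ) (Δ : ℝ) : Prop :=
  ∀ h, h < H → ∀ s a, πE h s a ≠ 0 → Δ ≤ πE h s a

/-- `πeval` satisfies `C★` (average-form) single-policy concentrability with
respect to `πb` (with the convention `0/0 = 0`). -/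
def Concentrable {S A : Type*} [Fintype S] [Fintype A] (H : ℕ)
    (P : ℕ → S → A → S → ℝ) (πeval πb : ℕ → S → A → ℝ) (s1 : S)
    (Cstar : ℝ) : Prop :=
  (∀ h, h < H → ∀ s a, dvisitSA P πb s1 h s a = 0 → dvisitSA P πeval s1 h s a = 0) ∧
  (1 / ((H : ℝ) * (Fintype.card S : ℝ))) *
      ∑ h ∈ Finset.range H, ∑ s, ∑ a,
        dvisitSA P πeval s1 h s a / dvisitSA P πb s1 h s a ≤ Cstar

/-- Matching-value construction: given a parameter pair `(V, Adv)` for the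
reward mapping of the MDP with kernel `P`, there is a parameter pair for the
MDP with kernel `Q` producing the same reward value at `(0, sbar, abar)`. -/
lemma key_match {S A : Type*} [Fintype S] [Fintype A]
    (H : ℕ) (hH : 2 ≤ H) (sbar : S) (abar : A)
    (P Q : ℕ → S → A → S → ℝ) (πE : ℕ → S → A → ℝ)
    (hPpos : ∀ t, 0 ≤ P 0 sbar abar t) (hPsum : ∑ t, P 0 sbar abar t = 1)
    (hQsum : ∑ t, Q 0 sbar abar t = 1)
    (V : ℕ → S → ℝ) (Adv : ℕ → S → A → ℝ)
    (hmem : (V, Adv) ∈ Vbar S H ×ˢ Abar S A H) :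
    ∃ q : ↥(Vbar S H ×ˢ Abar S A H),
      RStar Q πE q.1.1 q.1.2 0 sbar abar = RStar P πE V Adv 0 sbar abar := by
  obtain ⟨hV, hA⟩ := hmem
  set c : ℝ := ∑ t, P 0 sbar abar t * V 1 t with hc
  set V' : ℕ → S → ℝ := fun h s => if h = 1 then c else V h s with hV'
  have hcbound : |c| ≤ ((H - 1 : ℕ) : ℝ) := by
    calc |c| ≤ ∑ t, |P 0 sbar abar t * V 1 t| := Finset.abs_sum_le_sum_abs _ _
      _ ≤ ∑ t, P 0 sbar abar t * ((H - 1 : ℕ) : ℝ) := by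
          refine Finset.sum_le_sum fun t _ => ?_
          rw [abs_mul, abs_of_nonneg (hPpos t)]
          exact mul_le_mul_of_nonneg_left (hV 1 t) (hPpos t)
      _ = ((H - 1 : ℕ) : ℝ) := by rw [← Finset.sum_mul, hPsum, one_mul]
  have hmem' : (V', Adv) ∈ Vbar S H ×ˢ Abar S A H := by
    refine ⟨fun h s => ?_, hA⟩
    by_cases h1 : h = 1
    · simpa [hV', h1] using hcbound
    · simpa [hV', h1] using hV h s
  refine ⟨⟨(V', Adv), hmem'⟩, ?_⟩
  have hsum' : ∑ t, Q 0 sbar abar t * V' 1 t = c := by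
    simp only [hV', if_pos rfl]
    rw [← Finset.sum_mul, hQsum, one_mul]
  simp only [RStar, hsum']
  simp [hV', hc]

/-- there is a base metric `d` (namely
`d(r, r') = |r_1(s̄, ā) - r'_1(s̄, ā)|` for a fixed state-action pair) such that
for every IRL problem `(M, πE)` with `|S| ≥ 2` and `H ≥ 2` there is another IRL
problem `(M̂, π̂E)` with `D^H(𝓡★, 𝓡̂) = 0` but `D^M(R★, R̂) ≥ 1/2`. -/
theorem mapping_metric_strictly_stronger {S A : Type*} [Fintype S] [Fintype A]
    [Nonempty A] (H : ℕ) (hS : 2 ≤ Fintype.card S) (hH : 2 ≤ H) :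
    ∃ d : (ℕ → S → A → ℝ) → (ℕ → S → A → ℝ) → ℝ≥0,
      (∃ sbar : S, ∃ abar : A, ∀ r r' : ℕ → S → A → ℝ,
        (d r r' : ℝ) = |r 0 sbar abar - r' 0 sbar abar|) ∧
      ∀ (P : ℕ → S → A → S → ℝ) (πE : ℕ → S → A → ℝ),
        IsKernel P → IsPolicy πE →
        ∃ (Phat : ℕ → S → A → S → ℝ) (πEhat : ℕ → S → A → ℝ),
          IsKernel Phat ∧ IsPolicy πEhat ∧
          max
            (⨆ p : ↥(Vbar S H ×ˢ Abar S A H), ⨅ q : ↥(Vbar S H ×ˢ Abar S A H),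
              (d (RStar P πE p.1.1 p.1.2) (RStar Phat πEhat q.1.1 q.1.2) : ℝ≥0∞))
            (⨆ q : ↥(Vbar S H ×ˢ Abar S A H), ⨅ p : ↥(Vbar S H ×ˢ Abar S A H),
              (d (RStar P πE p.1.1 p.1.2) (RStar Phat πEhat q.1.1 q.1.2) : ℝ≥0∞))
            = 0 ∧
          (1 / 2 : ℝ≥0∞) ≤
            ⨆ p : ↥(Vbar S H ×ˢ Abar S A H),
              (d (RStar P πE p.1.1 p.1.2) (RStar Phat πEhat p.1.1 p.1.2) : ℝ≥0∞) := by
  classical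
  have hSne : Nonempty S := Fintype.card_pos_iff.mp (by omega)
  obtain ⟨sbar⟩ := hSne
  obtain ⟨abar⟩ := (inferInstance : Nonempty A)
  refine ⟨fun r r' => Real.toNNReal |r 0 sbar abar - r' 0 sbar abar|,
    ⟨sbar, abar, fun r r' => Real.coe_toNNReal _ (abs_nonneg _)⟩, ?_⟩
  intro P πE hP hπE
  obtain ⟨hPpos, hPsum⟩ := hP 0 sbar abar
  -- pick a state with small transition probability
  have hex : ∃ t : S, P 0 sbar abar t ≤ 1 / 2 := by
    by_contra hcon
    push_neg at hcon
    obtain ⟨s0, s1, hne⟩ := Fintype.exists_pair_of_one_lt_card (by omega : 1 < Fintype.card S)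
    have hsub : ∑ t ∈ ({s0, s1} : Finset S), P 0 sbar abar t ≤ ∑ t, P 0 sbar abar t :=
      Finset.sum_le_sum_of_subset_of_nonneg (Finset.subset_univ _)
        (fun t _ _ => hPpos t)
    rw [Finset.sum_pair hne, hPsum] at hsub
    have h0 := hcon s0
    have h1 := hcon s1
    linarith
  obtain ⟨sp, hsp⟩ := hex
  set Phat : ℕ → S → A → S → ℝ := fun h s a t =>
    if h = 0 ∧ s = sbar ∧ a = abar then (if t = sp then 1 else 0) else P h s a t
    with hPhat
  have hPhatKernel : IsKernel Phat := by
    intro h s a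
    by_cases hc : h = 0 ∧ s = sbar ∧ a = abar
    · constructor
      · intro t; simp only [hPhat, if_pos hc]; split <;> norm_num
      · simp [hPhat, hc]
    · constructor
      · intro t; simp only [hPhat, if_neg hc]; exact (hP h s a).1 t
      · simp only [hPhat, if_neg hc]; exact (hP h s a).2
  have hPhatrow : ∀ t, Phat 0 sbar abar t = if t = sp then 1 else 0 := by
    intro t; simp [hPhat]
  have hPhatsum : ∑ t, Phat 0 sbar abar t = 1 := (hPhatKernel 0 sbar abar).2
  have hPhatpos : ∀ t, 0 ≤ Phat 0 sbar abar t := (hPhatKernel 0 sbar abar).1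
  refine ⟨Phat, πE, hPhatKernel, hπE, ?_, ?_⟩
  · -- Hausdorff distance is zero
    have hX : (⨆ p : ↥(Vbar S H ×ˢ Abar S A H), ⨅ q : ↥(Vbar S H ×ˢ Abar S A H),
        ((Real.toNNReal |RStar P πE p.1.1 p.1.2 0 sbar abar -
          RStar Phat πE q.1.1 q.1.2 0 sbar abar| : ℝ≥0) : ℝ≥0∞)) = 0 := by
      refine le_antisymm (iSup_le fun p => ?_) zero_le
      obtain ⟨q, hq⟩ := key_match H hH sbar abar P Phat πE hPpos hPsum hPhatsum
        p.1.1 p.1.2 (by exact p.2)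
      refine iInf_le_of_le q ?_
      simp [hq]
    have hY : (⨆ q : ↥(Vbar S H ×ˢ Abar S A H), ⨅ p : ↥(Vbar S H ×ˢ Abar S A H),
        ((Real.toNNReal |RStar P πE p.1.1 p.1.2 0 sbar abar -
          RStar Phat πE q.1.1 q.1.2 0 sbar abar| : ℝ≥0) : ℝ≥0∞)) = 0 := by
      refine le_antisymm (iSup_le fun q => ?_) zero_le
      obtain ⟨p, hp⟩ := key_match H hH sbar abar Phat P πE hPhatpos hPhatsum hPsum
        q.1.1 q.1.2 (by exact q.2)
      refine iInf_le_of_le p ?_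
      simp [hp]
    simp only [hX, hY, max_self]
  · -- mapping distance is at least 1/2
    set V0 : ℕ → S → ℝ := fun h s => if h = 1 ∧ s = sp then 1 else 0 with hV0
    set A0 : ℕ → S → A → ℝ := fun _ _ _ => 0 with hA0
    have hmem : (V0, A0) ∈ Vbar S H ×ˢ Abar S A H := by
      constructor
      · intro h s
        by_cases hc : h = 1 ∧ s = sp
        · have : (1 : ℝ) ≤ ((H - h : ℕ) : ℝ) := by
            have : 1 ≤ H - h := by omega
            exact_mod_cast this
          simpa [hV0, hc] using this
        · simp [hV0, hc]
      · intro h s a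
        simp [hA0]
    refine le_trans ?_ (le_iSup _ (⟨(V0, A0), hmem⟩ : ↥(Vbar S H ×ˢ Abar S A H)))
    have hr : RStar P πE V0 A0 0 sbar abar = -(P 0 sbar abar sp) := by
      simp only [RStar, hV0, hA0]
      simp [Finset.sum_ite_eq' Finset.univ sp, mul_comm]
    have hr' : RStar Phat πE V0 A0 0 sbar abar = -1 := by
      simp only [RStar, hV0, hA0]
      have : ∑ t, Phat 0 sbar abar t * (if 1 = 1 ∧ t = sp then (1:ℝ) else 0) = 1 := by
        simp only [true_and, mul_ite, mul_one, mul_zero]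
        simp [Finset.sum_ite_eq' Finset.univ sp, hPhatrow]
      simp [this, hPhatrow]
    have habs : (1/2 : ℝ) ≤ |RStar P πE V0 A0 0 sbar abar -
        RStar Phat πE V0 A0 0 sbar abar| := by
      rw [hr, hr']
      have h0 : 0 ≤ P 0 sbar abar sp := hPpos sp
      rw [abs_of_nonneg (by linarith)]
      linarith
    calc (1/2 : ℝ≥0∞) = ((Real.toNNReal (1/2) : ℝ≥0) : ℝ≥0∞) := by
          rw [Real.toNNReal_div (by norm_num)]
          simp [Real.toNNReal_one, Real.toNNReal_ofNat]
      _ ≤ _ := by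
          exact_mod_cast Real.toNNReal_mono habs

end IRL
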